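/- Let η_1 ∈ (0, 1), let {x_n} ⊆ A, let {c_n} ⊂ (0, +∞), and for each n let V_n be a subgradient tuple at x_n. Suppose that for every n: x_{n+1} is a global minimiser of Q_{c_{n+1}}(·, x_n, V_n) over A; the function Γ(·, x_n, V_n) attains a global minimum over A, with minimal value Γ̂_n; and at least one of the following holds: (a) Γ(x_{n+1}, x_n, V_n) = 0, (b) Γ̂_n = φ(x_n) (i.e. x_n minimises Γ(·, x_n, V_n) over A), (c) Γ(x_{n+1}, x_n, V_n) − φ(x_n) ≤ η_1 (Γ̂_n − φ(x_n)). If the sequence {x_n} converges to a point x*, then x* is either feasible for (P) or an infeasible critical point of the penalty term φ. -/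

import Mathlib

open RealInnerProductSpace Finset Filter Topology

noncomputable section

/-- Euclidean space `ℝ^d`. -/
abbrev Euc (d : ℕ) := EuclideanSpace ℝ (Fin d)

/-- The (convex-analysis) subdifferential of `f` at `y`. -/
def subdiff {d : ℕ} (f : Euc d → ℝ) (y : Euc d) : Set (Euc d) :=
  {v | ∀ x, f y + ⟪v, x - y⟫ ≤ f x}

/-- The normal cone to `A` at `x`. -/
def normalCone {d : ℕ} (A : Set (Euc d)) (x : Euc d) : Set (Euc d) :=
  {v | ∀ y ∈ A, ⟪v, y - x⟫ ≤ 0}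

/-- A subgradient tuple `V = (v₀, vᵢ (i ∈ I), vⱼ, wⱼ (j ∈ E))` at the point `y`:
`v_k ∈ ∂h_k(y)` for `k ∈ {0} ∪ I ∪ E` and `w_j ∈ ∂g_j(y)` for `j ∈ E`. -/
structure SubgradTuple {d l p : ℕ} (h0 : Euc d → ℝ) (hI : Fin l → Euc d → ℝ)
    (gE hE : Fin p → Euc d → ℝ) (y : Euc d) : Type where
  v0 : Euc d
  vI : Fin l → Euc d
  vE : Fin p → Euc d
  wE : Fin p → Euc d
  v0_mem : v0 ∈ subdiff h0 y
  vI_mem : ∀ i, vI i ∈ subdiff (hI i) y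
  vE_mem : ∀ j, vE j ∈ subdiff (hE j) y
  wE_mem : ∀ j, wE j ∈ subdiff (gE j) y

variable {d l p : ℕ}

/-- The linearised infeasibility measure `Γ(x, y, V)`. -/
def Gam (gI : Fin l → Euc d → ℝ) {h0 : Euc d → ℝ} {hI : Fin l → Euc d → ℝ}
    {gE hE : Fin p → Euc d → ℝ} {y : Euc d}
    (V : SubgradTuple h0 hI gE hE y) (x : Euc d) : ℝ :=
  (∑ i, max (gI i x - hI i y - ⟪V.vI i, x - y⟫) 0)
  + ∑ j, max (gE j x - hE j y - ⟪V.vE j, x - y⟫)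
      (hE j x - gE j y - ⟪V.wE j, x - y⟫)

/-- The convex majorant `Q_c(x, y, V)` of the penalty function. -/
def Qfun (g0 : Euc d → ℝ) (gI : Fin l → Euc d → ℝ) {h0 : Euc d → ℝ}
    {hI : Fin l → Euc d → ℝ} {gE hE : Fin p → Euc d → ℝ} {y : Euc d}
    (V : SubgradTuple h0 hI gE hE y) (c : ℝ) (x : Euc d) : ℝ :=
  g0 x - ⟪V.v0, x - y⟫ + c * Gam gI V x

/-- The ℓ1 penalty term `φ`. -/
def phi (gI hI : Fin l → Euc d → ℝ) (gE hE : Fin p → Euc d → ℝ) (x : Euc d) : ℝ :=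
  (∑ i, max (gI i x - hI i x) 0) + ∑ j, |gE j x - hE j x|

/-- The ℓ1 penalty function `Φ_c = f₀ + c φ`. -/
def Phi (g0 h0 : Euc d → ℝ) (gI hI : Fin l → Euc d → ℝ) (gE hE : Fin p → Euc d → ℝ)
    (c : ℝ) (x : Euc d) : ℝ :=
  (g0 x - h0 x) + c * phi gI hI gE hE x

/-- Feasibility for the problem (P). -/
def Feasible (A : Set (Euc d)) (gI hI : Fin l → Euc d → ℝ)
    (gE hE : Fin p → Euc d → ℝ) (x : Euc d) : Prop :=
  x ∈ A ∧ (∀ i, gI i x - hI i x ≤ 0) ∧ (∀ j, gE j x - hE j x = 0)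

/-- Criticality for the problem (P) (Definition 1). -/
def IsCritical (A : Set (Euc d)) (g0 h0 : Euc d → ℝ) (gI hI : Fin l → Euc d → ℝ)
    (gE hE : Fin p → Euc d → ℝ) (x : Euc d) : Prop :=
  ∃ V : SubgradTuple h0 hI gE hE x, ∃ lam : Fin l → ℝ, ∃ mu1 mu2 : Fin p → ℝ,
    (∀ i, 0 ≤ lam i) ∧ (∀ j, 0 ≤ mu1 j) ∧ (∀ j, 0 ≤ mu2 j) ∧
    (∀ i, lam i * (gI i x - hI i x) = 0) ∧
    ∃ u0 ∈ subdiff g0 x, ∃ uI : Fin l → Euc d, (∀ i, uI i ∈ subdiff (gI i) x) ∧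
    ∃ uE : Fin p → Euc d, (∀ j, uE j ∈ subdiff (gE j) x) ∧
    ∃ zE : Fin p → Euc d, (∀ j, zE j ∈ subdiff (hE j) x) ∧
    ∃ ν ∈ normalCone A x,
      (0 : Euc d) = (u0 - V.v0) + (∑ i, lam i • (uI i - V.vI i))
        + (∑ j, mu1 j • (uE j - V.vE j)) - (∑ j, mu2 j • (V.wE j - zE j)) + ν

/-- Generalised criticality for the penalty parameter `c`. -/
def IsGenCritical (A : Set (Euc d)) (g0 h0 : Euc d → ℝ) (gI hI : Fin l → Euc d → ℝ)
    (gE hE : Fin p → Euc d → ℝ) (c : ℝ) (x : Euc d) : Prop :=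
  x ∈ A ∧ ∃ V : SubgradTuple h0 hI gE hE x, ∀ z ∈ A, Qfun g0 gI V c x ≤ Qfun g0 gI V c z

/-- Criticality for the penalty term `φ`. -/
def IsCriticalPen (A : Set (Euc d)) (h0 : Euc d → ℝ) (gI hI : Fin l → Euc d → ℝ)
    (gE hE : Fin p → Euc d → ℝ) (x : Euc d) : Prop :=
  x ∈ A ∧ ∃ V : SubgradTuple h0 hI gE hE x, ∀ z ∈ A, Gam gI V x ≤ Gam gI V z

/-- `F` is coercive on `A`. -/
def CoerciveOn {d : ℕ} (F : Euc d → ℝ) (A : Set (Euc d)) : Prop :=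
  ∀ u : ℕ → Euc d, (∀ n, u n ∈ A) → Tendsto (fun n => ‖u n‖) atTop atTop →
    Tendsto (fun n => F (u n)) atTop atTop

section MyAux

variable {d l p : ℕ}

lemma myconv_cont {F : Euc d → ℝ} (hF : ConvexOn ℝ Set.univ F) : Continuous F := by
  rw [← continuousOn_univ]
  exact ConvexOn.continuousOn isOpen_univ hF

lemma phi_nonneg (gI hI : Fin l → Euc d → ℝ) (gE hE : Fin p → Euc d → ℝ) (x : Euc d) :
    0 ≤ phi gI hI gE hE x :=
  add_nonneg (Finset.sum_nonneg fun i _ => le_max_right _ _)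
    (Finset.sum_nonneg fun j _ => abs_nonneg _)

lemma phi_le_Gam (gI : Fin l → Euc d → ℝ) {h0 : Euc d → ℝ} {hI : Fin l → Euc d → ℝ}
    {gE hE : Fin p → Euc d → ℝ} {y : Euc d} (V : SubgradTuple h0 hI gE hE y) (x : Euc d) :
    phi gI hI gE hE x ≤ Gam gI V x := by
  unfold phi Gam
  apply add_le_add
  · apply Finset.sum_le_sum; intro i _
    refine max_le_max ?_ le_rfl
    have := V.vI_mem i x
    linarith
  · apply Finset.sum_le_sum; intro j _
    rw [abs_eq_max_neg]
    apply max_le_max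
    · have := V.vE_mem j x; linarith
    · have := V.wE_mem j x; linarith

lemma Gam_self (gI : Fin l → Euc d → ℝ) {h0 : Euc d → ℝ} {hI : Fin l → Euc d → ℝ}
    {gE hE : Fin p → Euc d → ℝ} {y : Euc d} (V : SubgradTuple h0 hI gE hE y) :
    Gam gI V y = phi gI hI gE hE y := by
  unfold Gam phi
  congr 1
  · exact Finset.sum_congr rfl fun i _ => by simp
  · refine Finset.sum_congr rfl fun j _ => ?_
    simp only [sub_self, inner_zero_right, sub_zero]
    rcases le_total (hE j y) (gE j y) with h | h
    · rw [abs_of_nonneg (by linarith), max_eq_left (by linarith)]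
    · rw [abs_of_nonpos (by linarith), max_eq_right (by linarith)]; ring

lemma feasible_of_phi_eq_zero {A : Set (Euc d)} {gI hI : Fin l → Euc d → ℝ}
    {gE hE : Fin p → Euc d → ℝ} {x : Euc d} (hxA : x ∈ A)
    (h : phi gI hI gE hE x = 0) : Feasible A gI hI gE hE x := by
  unfold phi at h
  have hs1 : (0:ℝ) ≤ ∑ i, max (gI i x - hI i x) 0 :=
    Finset.sum_nonneg fun i _ => le_max_right _ _
  have hs2 : (0:ℝ) ≤ ∑ j, |gE j x - hE j x| :=
    Finset.sum_nonneg fun j _ => abs_nonneg _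
  have h1 : ∑ i, max (gI i x - hI i x) 0 = 0 := by linarith
  have h2 : ∑ j, |gE j x - hE j x| = 0 := by linarith
  refine ⟨hxA, ?_, ?_⟩
  · intro i
    have := (Finset.sum_eq_zero_iff_of_nonneg
      (fun i _ => le_max_right (gI i x - hI i x) 0)).mp h1 i (Finset.mem_univ i)
    have h3 : gI i x - hI i x ≤ max (gI i x - hI i x) 0 := le_max_left _ _
    linarith
  · intro j
    have := (Finset.sum_eq_zero_iff_of_nonneg
      (fun j _ => abs_nonneg (gE j x - hE j x))).mp h2 j (Finset.mem_univ j)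
    exact sub_eq_zero.mp (abs_eq_zero.mp this) |>.symm ▸ (by
      have := abs_eq_zero.mp this; linarith [abs_nonneg (gE j x - hE j x),
        le_abs_self (gE j x - hE j x), neg_abs_le (gE j x - hE j x)])

lemma subdiff_closed {h : Euc d → ℝ} (hcont : Continuous h) {y v : ℕ → Euc d} {y0 v0 : Euc d}
    (hy : Tendsto y atTop (𝓝 y0)) (hv : Tendsto v atTop (𝓝 v0))
    (hmem : ∀ n, v n ∈ subdiff h (y n)) : v0 ∈ subdiff h y0 := by
  intro z
  have h1 : Tendsto (fun n => h (y n) + ⟪v n, z - y n⟫) atTop (𝓝 (h y0 + ⟪v0, z - y0⟫)) :=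
    ((hcont.tendsto y0).comp hy).add (hv.inner (tendsto_const_nhds.sub hy))
  exact le_of_tendsto h1 (Filter.Eventually.of_forall fun n => hmem n z)

lemma subdiff_bounded {h : Euc d → ℝ} (hcont : Continuous h) {y : ℕ → Euc d} {y0 : Euc d}
    (hy : Tendsto y atTop (𝓝 y0)) {v : ℕ → Euc d}
    (hv : ∀ n, v n ∈ subdiff h (y n)) : ∃ C, ∀ n, ‖v n‖ ≤ C := by
  obtain ⟨R0, hR0⟩ := hy.cauchySeq.isBounded_range.subset_closedBall y0
  set R : ℝ := max R0 0 with hRdef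
  have hR : ∀ n, ‖y n - y0‖ ≤ R := by
    intro n
    have := hR0 (Set.mem_range_self n)
    rw [Metric.mem_closedBall, dist_eq_norm] at this
    exact this.trans (le_max_left _ _)
  obtain ⟨M, hM⟩ := (isCompact_closedBall y0 (R + 1)).exists_bound_of_continuousOn
    hcont.continuousOn
  have hMnn : 0 ≤ M := le_trans (norm_nonneg _) (hM y0 (by
    simp [Metric.mem_closedBall]; positivity))
  refine ⟨2 * M, fun n => ?_⟩
  rcases eq_or_ne (v n) 0 with h0 | h0
  · simp [h0]; positivity
  · set e : Euc d := ‖v n‖⁻¹ • v n with he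
    have hne : ‖e‖ = 1 := by
      rw [he, norm_smul, norm_inv, norm_norm, inv_mul_cancel₀ (norm_ne_zero_iff.mpr h0)]
    have hmem1 : y n ∈ Metric.closedBall y0 (R + 1) := by
      rw [Metric.mem_closedBall, dist_eq_norm]
      linarith [hR n]
    have hmem2 : y n + e ∈ Metric.closedBall y0 (R + 1) := by
      rw [Metric.mem_closedBall, dist_eq_norm]
      calc ‖y n + e - y0‖ = ‖(y n - y0) + e‖ := by rw [add_sub_right_comm]
        _ ≤ ‖y n - y0‖ + ‖e‖ := norm_add_le _ _
        _ ≤ R + 1 := by rw [hne]; linarith [hR n]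
    have hsub := hv n (y n + e)
    have hinner : ⟪v n, (y n + e) - y n⟫ = ‖v n‖ := by
      rw [add_sub_cancel_left, he, real_inner_smul_right, real_inner_self_eq_norm_sq, sq,
        inv_mul_cancel_left₀ (norm_ne_zero_iff.mpr h0)]
    rw [hinner] at hsub
    have b1 : ‖h (y n + e)‖ ≤ M := hM _ hmem2
    have b2 : ‖h (y n)‖ ≤ M := hM _ hmem1
    rw [Real.norm_eq_abs, abs_le] at b1 b2
    linarith

lemma phi_continuous {gI hI : Fin l → Euc d → ℝ} {gE hE : Fin p → Euc d → ℝ}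
    (hgI : ∀ i, Continuous (gI i)) (hhI : ∀ i, Continuous (hI i))
    (hgE : ∀ j, Continuous (gE j)) (hhE : ∀ j, Continuous (hE j)) :
    Continuous (phi gI hI gE hE) := by
  unfold phi
  apply Continuous.add
  · exact continuous_finset_sum _ fun i _ => ((hgI i).sub (hhI i)).max continuous_const
  · exact continuous_finset_sum _ fun j _ => ((hgE j).sub (hhE j)).abs

lemma Gam_tendsto (gI : Fin l → Euc d → ℝ) {h0 : Euc d → ℝ} {hI : Fin l → Euc d → ℝ}
    {gE hE : Fin p → Euc d → ℝ}
    (hcI : ∀ i, Continuous (hI i)) (hcgE : ∀ j, Continuous (gE j))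
    (hchE : ∀ j, Continuous (hE j))
    {y : ℕ → Euc d} {y0 : Euc d} (hy : Tendsto y atTop (𝓝 y0))
    (W : (n : ℕ) → SubgradTuple h0 hI gE hE (y n)) (W0 : SubgradTuple h0 hI gE hE y0)
    (hvI : ∀ i, Tendsto (fun n => (W n).vI i) atTop (𝓝 (W0.vI i)))
    (hvE : ∀ j, Tendsto (fun n => (W n).vE j) atTop (𝓝 (W0.vE j)))
    (hwE : ∀ j, Tendsto (fun n => (W n).wE j) atTop (𝓝 (W0.wE j)))
    (z : Euc d) :
    Tendsto (fun n => Gam gI (W n) z) atTop (𝓝 (Gam gI W0 z)) := by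
  unfold Gam
  apply Tendsto.add
  · apply tendsto_finset_sum; intro i _
    exact ((tendsto_const_nhds.sub (((hcI i).tendsto y0).comp hy)).sub
      ((hvI i).inner (tendsto_const_nhds.sub hy))).max tendsto_const_nhds
  · apply tendsto_finset_sum; intro j _
    exact Tendsto.max
      ((tendsto_const_nhds.sub (((hchE j).tendsto y0).comp hy)).sub
        ((hvE j).inner (tendsto_const_nhds.sub hy)))
      ((tendsto_const_nhds.sub (((hcgE j).tendsto y0).comp hy)).sub
        ((hwE j).inner (tendsto_const_nhds.sub hy)))

end MyAux

theorem stmt11 {d l p : ℕ} (A : Set (Euc d)) (g0 h0 : Euc d → ℝ)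
    (gI hI : Fin l → Euc d → ℝ) (gE hE : Fin p → Euc d → ℝ)
    (hA : Convex ℝ A) (hAcl : IsClosed A) (hAne : A.Nonempty)
    (hg0 : ConvexOn ℝ Set.univ g0) (hh0 : ConvexOn ℝ Set.univ h0)
    (hgI : ∀ i, ConvexOn ℝ Set.univ (gI i)) (hhI : ∀ i, ConvexOn ℝ Set.univ (hI i))
    (hgE : ∀ j, ConvexOn ℝ Set.univ (gE j)) (hhE : ∀ j, ConvexOn ℝ Set.univ (hE j))
    (η1 : ℝ) (hη0 : 0 < η1) (hη1 : η1 < 1)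
    (x : ℕ → Euc d) (hxA : ∀ n, x n ∈ A) (c : ℕ → ℝ) (hc : ∀ n, 0 < c n)
    (V : (n : ℕ) → SubgradTuple h0 hI gE hE (x n))
    (hmin : ∀ n, ∀ z ∈ A,
      Qfun g0 gI (V n) (c (n + 1)) (x (n + 1)) ≤ Qfun g0 gI (V n) (c (n + 1)) z)
    (xhat : ℕ → Euc d) (hxhatA : ∀ n, xhat n ∈ A)
    (hxhat : ∀ n, ∀ z ∈ A, Gam gI (V n) (xhat n) ≤ Gam gI (V n) z)
    (halt : ∀ n, Gam gI (V n) (x (n + 1)) = 0 ∨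
      Gam gI (V n) (xhat n) = phi gI hI gE hE (x n) ∨
      Gam gI (V n) (x (n + 1)) - phi gI hI gE hE (x n) ≤
        η1 * (Gam gI (V n) (xhat n) - phi gI hI gE hE (x n)))
    (xs : Euc d) (hconv : Tendsto x atTop (𝓝 xs)) :
    Feasible A gI hI gE hE xs ∨
      (¬ Feasible A gI hI gE hE xs ∧ IsCriticalPen A h0 gI hI gE hE xs) := by
  classical
  have ch0 : Continuous h0 := myconv_cont hh0
  have cgI : ∀ i, Continuous (gI i) := fun i => myconv_cont (hgI i)
  have chI : ∀ i, Continuous (hI i) := fun i => myconv_cont (hhI i)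
  have cgE : ∀ j, Continuous (gE j) := fun j => myconv_cont (hgE j)
  have chE : ∀ j, Continuous (hE j) := fun j => myconv_cont (hhE j)
  have hxsA : xs ∈ A := hAcl.mem_of_tendsto hconv (Filter.Eventually.of_forall hxA)
  have cphi : Continuous (phi gI hI gE hE) := phi_continuous cgI chI cgE chE
  have hphix : Tendsto (fun n => phi gI hI gE hE (x n)) atTop (𝓝 (phi gI hI gE hE xs)) :=
    (cphi.tendsto xs).comp hconv
  by_cases hfeas : Feasible A gI hI gE hE xs
  · exact Or.inl hfeas
  right
  refine ⟨hfeas, ?_⟩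
  by_cases hfa : ∃ᶠ n in atTop, Gam gI (V n) (x (n + 1)) = 0
  · exfalso
    obtain ⟨ψ, hψmono, hψ0⟩ := Filter.extraction_of_frequently_atTop hfa
    have hsm : StrictMono fun k => ψ k + 1 :=
      fun _ _ hab => Nat.add_lt_add_right (hψmono hab) 1
    have hsub : Tendsto (fun k => x (ψ k + 1)) atTop (𝓝 xs) :=
      hconv.comp hsm.tendsto_atTop
    have hphiz : ∀ k, phi gI hI gE hE (x (ψ k + 1)) = 0 := fun k =>
      le_antisymm (by rw [← hψ0 k]; exact phi_le_Gam gI (V (ψ k)) _) (phi_nonneg _ _ _ _ _)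
    have hps : phi gI hI gE hE xs = 0 := by
      have h1 : Tendsto (fun k => phi gI hI gE hE (x (ψ k + 1))) atTop
          (𝓝 (phi gI hI gE hE xs)) := (cphi.tendsto xs).comp hsub
      have h2 : Tendsto (fun k => phi gI hI gE hE (x (ψ k + 1))) atTop (𝓝 0) := by
        simp only [hphiz]; exact tendsto_const_nhds
      exact tendsto_nhds_unique h1 h2
    exact hfeas (feasible_of_phi_eq_zero hxsA hps)
  have hGamself : ∀ n, Gam gI (V n) (x n) = phi gI hI gE hE (x n) :=
    fun n => Gam_self gI (V n)
  have hδle : ∀ n, Gam gI (V n) (xhat n) - phi gI hI gE hE (x n) ≤ 0 := fun n => by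
    have h1 := hxhat n (x n) (hxA n)
    have h2 := hGamself n
    linarith
  obtain ⟨ψ, hψmono, hψδ⟩ : ∃ ψ : ℕ → ℕ, StrictMono ψ ∧
      Tendsto (fun k => Gam gI (V (ψ k)) (xhat (ψ k)) - phi gI hI gE hE (x (ψ k)))
        atTop (𝓝 0) := by
    by_cases hfb : ∃ᶠ n in atTop, Gam gI (V n) (xhat n) = phi gI hI gE hE (x n)
    · obtain ⟨ψ, h1, h2⟩ := Filter.extraction_of_frequently_atTop hfb
      refine ⟨ψ, h1, ?_⟩
      have heq : (fun k => Gam gI (V (ψ k)) (xhat (ψ k)) - phi gI hI gE hE (x (ψ k)))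
          = fun _ => (0:ℝ) := funext fun k => by rw [h2 k]; ring
      rw [heq]; exact tendsto_const_nhds
    · refine ⟨id, strictMono_id, ?_⟩
      have hec : ∀ᶠ n in atTop,
          Gam gI (V n) (x (n + 1)) - phi gI hI gE hE (x n) ≤
            η1 * (Gam gI (V n) (xhat n) - phi gI hI gE hE (x n)) := by
        filter_upwards [Filter.not_frequently.mp hfa, Filter.not_frequently.mp hfb]
          with n ha hb
        rcases halt n with h | h | h
        · exact absurd h ha
        · exact absurd h hb
        · exact h
      have hlow : ∀ᶠ n in atTop,
          (phi gI hI gE hE (x (n + 1)) - phi gI hI gE hE (x n)) / η1 ≤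
            Gam gI (V n) (xhat n) - phi gI hI gE hE (x n) := by
        filter_upwards [hec] with n h
        have h2 : phi gI hI gE hE (x (n + 1)) ≤ Gam gI (V n) (x (n + 1)) :=
          phi_le_Gam gI (V n) _
        rw [div_le_iff₀ hη0]
        nlinarith
      have hup : ∀ᶠ n in atTop,
          Gam gI (V n) (xhat n) - phi gI hI gE hE (x n) ≤ 0 :=
        Filter.Eventually.of_forall hδle
      have hdiff : Tendsto
          (fun n => (phi gI hI gE hE (x (n + 1)) - phi gI hI gE hE (x n)) / η1)
          atTop (𝓝 0) := by
        have h1 : Tendsto (fun n => phi gI hI gE hE (x (n + 1))) atTop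
            (𝓝 (phi gI hI gE hE xs)) := hphix.comp (tendsto_add_atTop_nat 1)
        simpa using (h1.sub hphix).div_const η1
      exact tendsto_of_tendsto_of_tendsto_of_le_of_le' hdiff tendsto_const_nhds hlow hup
  -- extract convergent subgradient tuples along ψ
  have hyconv : Tendsto (fun k => x (ψ k)) atTop (𝓝 xs) := hconv.comp hψmono.tendsto_atTop
  obtain ⟨C0, hC0⟩ := subdiff_bounded ch0 hyconv (fun k => (V (ψ k)).v0_mem)
  choose CI hCI using fun i => subdiff_bounded (chI i) hyconv (fun k => (V (ψ k)).vI_mem i)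
  choose CE hCE using fun j => subdiff_bounded (chE j) hyconv (fun k => (V (ψ k)).vE_mem j)
  choose CW hCW using fun j => subdiff_bounded (cgE j) hyconv (fun k => (V (ψ k)).wE_mem j)
  obtain ⟨DI, hDI⟩ := Finite.exists_le CI
  obtain ⟨DE, hDE⟩ := Finite.exists_le CE
  obtain ⟨DW, hDW⟩ := Finite.exists_le CW
  set U : ℕ → Euc d × (Fin l → Euc d) × (Fin p → Euc d) × (Fin p → Euc d) :=
    fun k => ((V (ψ k)).v0, (V (ψ k)).vI, (V (ψ k)).vE, (V (ψ k)).wE) with hUdef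
  set C : ℝ := max 0 (max C0 (max DI (max DE DW))) with hCdef
  have hCnn : (0:ℝ) ≤ C := le_max_left _ _
  have hUb : ∀ k, ‖U k‖ ≤ C := by
    intro k
    rw [Prod.norm_def]
    refine max_le ((hC0 k).trans (by rw [hCdef]; simp [le_max_iff])) ?_
    rw [Prod.norm_def]
    refine max_le ((pi_norm_le_iff_of_nonneg hCnn).mpr fun i =>
      ((hCI i k).trans ((hDI i).trans (by rw [hCdef]; simp [le_max_iff])))) ?_
    rw [Prod.norm_def]
    refine max_le ((pi_norm_le_iff_of_nonneg hCnn).mpr fun j =>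
      ((hCE j k).trans ((hDE j).trans (by rw [hCdef]; simp [le_max_iff])))) ?_
    exact (pi_norm_le_iff_of_nonneg hCnn).mpr fun j =>
      ((hCW j k).trans ((hDW j).trans (by rw [hCdef]; simp [le_max_iff])))
  obtain ⟨L, -, ρ, hρmono, hρten⟩ :=
    tendsto_subseq_of_bounded (Metric.isBounded_closedBall (x := (0 : Euc d ×
      (Fin l → Euc d) × (Fin p → Euc d) × (Fin p → Euc d))) (r := C))
      (fun k => mem_closedBall_zero_iff.mpr (hUb k))
  have hyρ : Tendsto (fun k => x (ψ (ρ k))) atTop (𝓝 xs) :=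
    hyconv.comp hρmono.tendsto_atTop
  have hv0t : Tendsto (fun k => (V (ψ (ρ k))).v0) atTop (𝓝 L.1) :=
    (continuous_fst.tendsto L).comp hρten
  have hvIfun : Tendsto (fun k => (V (ψ (ρ k))).vI) atTop (𝓝 L.2.1) :=
    ((continuous_fst.comp continuous_snd).tendsto L).comp hρten
  have hvEfun : Tendsto (fun k => (V (ψ (ρ k))).vE) atTop (𝓝 L.2.2.1) :=
    ((continuous_fst.comp (continuous_snd.comp continuous_snd)).tendsto L).comp hρten
  have hwEfun : Tendsto (fun k => (V (ψ (ρ k))).wE) atTop (𝓝 L.2.2.2) :=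
    ((continuous_snd.comp (continuous_snd.comp continuous_snd)).tendsto L).comp hρten
  have hvIt : ∀ i, Tendsto (fun k => (V (ψ (ρ k))).vI i) atTop (𝓝 (L.2.1 i)) :=
    fun i => ((continuous_apply i).tendsto _).comp hvIfun
  have hvEt : ∀ j, Tendsto (fun k => (V (ψ (ρ k))).vE j) atTop (𝓝 (L.2.2.1 j)) :=
    fun j => ((continuous_apply j).tendsto _).comp hvEfun
  have hwEt : ∀ j, Tendsto (fun k => (V (ψ (ρ k))).wE j) atTop (𝓝 (L.2.2.2 j)) :=
    fun j => ((continuous_apply j).tendsto _).comp hwEfun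
  set Vstar : SubgradTuple h0 hI gE hE xs :=
    { v0 := L.1, vI := L.2.1, vE := L.2.2.1, wE := L.2.2.2
      v0_mem := subdiff_closed ch0 hyρ hv0t (fun k => (V (ψ (ρ k))).v0_mem)
      vI_mem := fun i => subdiff_closed (chI i) hyρ (hvIt i)
        (fun k => (V (ψ (ρ k))).vI_mem i)
      vE_mem := fun j => subdiff_closed (chE j) hyρ (hvEt j)
        (fun k => (V (ψ (ρ k))).vE_mem j)
      wE_mem := fun j => subdiff_closed (cgE j) hyρ (hwEt j)
        (fun k => (V (ψ (ρ k))).wE_mem j) } with hVstar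
  refine ⟨hxsA, Vstar, fun z hz => ?_⟩
  rw [Gam_self gI Vstar]
  have hLHS : Tendsto (fun k => phi gI hI gE hE (x (ψ (ρ k))) +
      (Gam gI (V (ψ (ρ k))) (xhat (ψ (ρ k))) - phi gI hI gE hE (x (ψ (ρ k)))))
      atTop (𝓝 (phi gI hI gE hE xs)) := by
    have h1 : Tendsto (fun k => phi gI hI gE hE (x (ψ (ρ k)))) atTop
        (𝓝 (phi gI hI gE hE xs)) := (cphi.tendsto xs).comp hyρ
    have h2 : Tendsto (fun k => Gam gI (V (ψ (ρ k))) (xhat (ψ (ρ k))) -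
        phi gI hI gE hE (x (ψ (ρ k)))) atTop (𝓝 0) := hψδ.comp hρmono.tendsto_atTop
    simpa using h1.add h2
  have hRHS : Tendsto (fun k => Gam gI (V (ψ (ρ k))) z) atTop (𝓝 (Gam gI Vstar z)) :=
    Gam_tendsto gI chI cgE chE hyρ (fun k => V (ψ (ρ k))) Vstar hvIt hvEt hwEt z
  exact le_of_tendsto_of_tendsto' hLHS hRHS fun k => by
    have := hxhat (ψ (ρ k)) z hz; linarith
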